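/- Let (a_k, ..., a_n) be real numbers with a_k ≠ 0, a_n ≠ 0, and a_j = 0 for all k < j < n, and suppose a_k * a_n > 0. If f is a real analytic function on [k, n], not identically zero, with f(j) = (-1)^j * a_j for integers k ≤ j ≤ n, then f has at least n - k zeros (with multiplicity) in the open interval (k, n). -/

import Mathlib

/-- `f` vanishes to exact order `n` at `x`. -/
def ZeroMult (f : ℝ → ℝ) (x : ℝ) (n : ℕ) : Prop :=
  ∃ g : ℝ → ℝ, AnalyticAt ℝ g x ∧ g x ≠ 0 ∧ ∀ᶠ y in nhds x, f y = (y - x) ^ n * g y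

open Filter Topology

lemma key_mult {f : ℝ → ℝ} {k n : ℝ}
    (hf : AnalyticOnNhd ℝ f (Set.Icc k n))
    (hne : ∃ x ∈ Set.Icc k n, f x ≠ 0) {x : ℝ} (hx : x ∈ Set.Icc k n) :
    ∃ m : ℕ, ZeroMult f x m ∧ (f x = 0 → 1 ≤ m) ∧
      (f x = 0 → deriv f x = 0 → 2 ≤ m) := by
  have hx' : AnalyticAt ℝ f x := hf x hx
  have hfin : analyticOrderAt f x ≠ ⊤ := by
    intro htop
    rw [analyticOrderAt_eq_top] at htop
    obtain ⟨y, hy, hfy⟩ := hne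
    exact hfy (hf.eqOn_zero_of_preconnected_of_eventuallyEq_zero isPreconnected_Icc hx htop hy)
  set m := (analyticOrderAt f x).toNat with hm
  have hOrd : analyticOrderAt f x = (m : ℕ∞) := (ENat.coe_toNat hfin).symm
  obtain ⟨g, hg, hgx, hfg⟩ := (hx'.analyticOrderAt_eq_natCast (n := m)).mp hOrd
  have hfg' : ∀ᶠ y in nhds x, f y = (y - x) ^ m * g y := by
    filter_upwards [hfg] with y hy; simpa [smul_eq_mul] using hy
  have h1 : f x = 0 → 1 ≤ m := by
    intro hfx
    rcases Nat.eq_zero_or_pos m with h0 | h1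
    · exfalso
      have hself := hfg'.self_of_nhds
      rw [h0] at hself
      simp only [pow_zero, one_mul] at hself
      exact hgx (hself ▸ hfx)
    · exact h1
  refine ⟨m, ⟨g, hg, hgx, hfg'⟩, h1, ?_⟩
  intro hfx hdf
  by_contra h2
  have hm1 : m = 1 := by have := h1 hfx; omega
  rw [hm1] at hfg'
  have hd1 : HasDerivAt (fun y => y - x) 1 x := (hasDerivAt_id x).sub_const x
  have hd2 : HasDerivAt g (deriv g x) x := hg.differentiableAt.hasDerivAt
  have hd : HasDerivAt (fun y => (y - x) ^ 1 * g y) (g x) x := by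
    have := hd1.mul hd2
    simpa [Pi.mul_def] using this
  have hdf' : HasDerivAt f (g x) x := hd.congr_of_eventuallyEq hfg'
  rw [hdf'.deriv] at hdf
  exact hgx hdf

/-- If `a k ≠ 0`, `a n ≠ 0`, `a j = 0` for `k < j < n`, and `a k * a n > 0`,
then any real analytic `f` on `[k, n]`, not identically zero, with
`f j = (-1)^j a j`, has at least `n - k` zeros with multiplicity in `(k, n)`. -/
theorem zeros_ge_of_no_sign_change (k n : ℕ) (hkn : k < n) (a : ℕ → ℝ)
    (hak : a k ≠ 0) (han : a n ≠ 0) (hmid : ∀ j, k < j → j < n → a j = 0)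
    (hpos : a k * a n > 0) (f : ℝ → ℝ)
    (hf : AnalyticOnNhd ℝ f (Set.Icc (k : ℝ) n))
    (hne : ∃ x ∈ Set.Icc (k : ℝ) n, f x ≠ 0)
    (hval : ∀ j : ℕ, k ≤ j → j ≤ n → f j = (-1 : ℝ) ^ j * a j) :
    ∃ (Z : Finset ℝ) (mult : ℝ → ℕ),
      (∀ x ∈ Z, x ∈ Set.Ioo (k : ℝ) n ∧ f x = 0 ∧ ZeroMult f x (mult x)) ∧
      n - k ≤ ∑ x ∈ Z, mult x := by
  classical
  set S : Finset ℕ := Finset.Ioo k n with hS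
  set P : ℝ → ℝ := fun y => ∏ j ∈ S, (y - (j:ℝ)) with hP
  set R : ℝ → ℝ := fun y => ∏ j ∈ S.filter (fun i : ℕ => ¬ ((i:ℝ) = y)), (y - (j:ℝ)) with hR
  set g : ℝ → ℝ := fun y => if P y = 0 then deriv f y / R y else f y / P y with hg
  -- basic facts
  have hkn' : (k:ℝ) < n := by exact_mod_cast hkn
  have hScard : S.card = n - k - 1 := by rw [hS, Nat.card_Ioo]
  have hmemS : ∀ j ∈ S, k < j ∧ j < n := by
    intro j hj; rw [hS, Finset.mem_Ioo] at hj; exact hj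
  have hfj0 : ∀ j ∈ S, f (j:ℝ) = 0 := by
    intro j hj
    obtain ⟨h1, h2⟩ := hmemS j hj
    rw [hval j h1.le h2.le, hmid j h1 h2, mul_zero]
  have hPcont : Continuous P := by
    apply continuous_finset_prod
    exact fun j _ => continuous_id.sub continuous_const
  have hPzero : ∀ y : ℝ, P y = 0 ↔ ∃ j ∈ S, y = (j:ℝ) := by
    intro y
    rw [hP]
    simp only [Finset.prod_eq_zero_iff, sub_eq_zero]
  have hPk : P (k:ℝ) ≠ 0 := by
    rw [Ne, hPzero]
    rintro ⟨j, hj, hje⟩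
    exact absurd (Nat.cast_injective hje) (by have := (hmemS j hj).1; omega)
  have hPn : P (n:ℝ) ≠ 0 := by
    rw [Ne, hPzero]
    rintro ⟨j, hj, hje⟩
    exact absurd (Nat.cast_injective hje) (by have := (hmemS j hj).2; omega)
  have hgk : g (k:ℝ) = f k / P k := by rw [hg]; simp [hPk]
  have hgn : g (n:ℝ) = f n / P n := by rw [hg]; simp [hPn]
  -- sign computation
  have hsign : g (k:ℝ) * g (n:ℝ) < 0 := by
    have hfk : f (k:ℝ) = (-1:ℝ)^k * a k := hval k le_rfl hkn.le
    have hfn : f (n:ℝ) = (-1:ℝ)^n * a n := hval n hkn.le le_rfl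
    set C : ℝ := ∏ j ∈ S, ((j:ℝ) - k) with hC
    have hCpos : 0 < C := by
      apply Finset.prod_pos
      intro j hj
      have := (hmemS j hj).1
      have : (k:ℝ) < j := by exact_mod_cast this
      linarith
    have hPnpos : 0 < P (n:ℝ) := by
      apply Finset.prod_pos
      intro j hj
      have := (hmemS j hj).2
      have : (j:ℝ) < n := by exact_mod_cast this
      linarith
    have hPkEq : P (k:ℝ) = (-1:ℝ)^S.card * C := by
      have h0 : P (k:ℝ) = ∏ j ∈ S, ((k:ℝ) - j) := rfl
      rw [h0, show (∏ j ∈ S, ((k:ℝ) - j)) = ∏ j ∈ S, ((-1) * ((j:ℝ) - k)) from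
        Finset.prod_congr rfl (fun j _ => by ring),
        Finset.prod_mul_distrib, Finset.prod_const, hC]
    set m' := S.card with hm'
    have heps : ((-1:ℝ)^m') ≠ 0 := pow_ne_zero _ (by norm_num)
    have hparity : (-1:ℝ)^k * (-1:ℝ)^n = -((-1:ℝ)^m') := by
      have hkn2 : k + n = m' + (2*k+1) := by omega
      calc (-1:ℝ)^k * (-1:ℝ)^n = (-1:ℝ)^(k+n) := (pow_add _ _ _).symm
        _ = (-1:ℝ)^m' * (-1:ℝ)^(2*k+1) := by rw [hkn2, pow_add]
        _ = -((-1:ℝ)^m') := by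
            have h2 : (-1:ℝ)^(2*k+1) = -1 := by
              rw [pow_add, pow_mul]; norm_num
            rw [h2]; ring
    have hnum : f (k:ℝ) * f (n:ℝ) = -((-1:ℝ)^m' * (a k * a n)) := by
      rw [hfk, hfn]
      calc (-1:ℝ)^k * a k * ((-1:ℝ)^n * a n)
          = ((-1:ℝ)^k * (-1:ℝ)^n) * (a k * a n) := by ring
        _ = -((-1:ℝ)^m' * (a k * a n)) := by rw [hparity]; ring
    have hden : P (k:ℝ) * P (n:ℝ) = (-1:ℝ)^m' * (C * P (n:ℝ)) := by
      rw [hPkEq]; ring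
    rw [hgk, hgn, div_mul_div_comm, hnum, hden, neg_div,
      mul_div_mul_left _ _ heps]
    exact neg_neg_iff_pos.mpr (div_pos hpos (mul_pos hCpos hPnpos))
  -- continuity of g on Icc
  have hRne : ∀ y : ℝ, R y ≠ 0 := by
    intro y
    rw [hR, Finset.prod_ne_zero_iff]
    intro i hi
    have := (Finset.mem_filter.mp hi).2
    exact sub_ne_zero.mpr (fun h => this h.symm)
  have hgcont : ContinuousOn g (Set.Icc (k:ℝ) n) := by
    intro x hx
    apply ContinuousAt.continuousWithinAt
    by_cases hPx : P x = 0
    · obtain ⟨j, hjS, hxj⟩ := (hPzero x).mp hPx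
      set Q : ℝ → ℝ := fun y => ∏ i ∈ S.erase j, (y - (i:ℝ)) with hQ
      have hQc : Continuous Q := by
        apply continuous_finset_prod
        exact fun i _ => continuous_id.sub continuous_const
      have hQx : Q x ≠ 0 := by
        rw [hQ, Finset.prod_ne_zero_iff]
        intro i hi
        have hij : i ≠ j := (Finset.mem_erase.mp hi).1
        have hij' : (i:ℝ) ≠ (j:ℝ) := by exact_mod_cast hij
        rw [hxj]
        exact sub_ne_zero.mpr (Ne.symm hij')
      have hgxval : g x = deriv f x / Q x := by
        simp only [hg, if_pos hPx]
        congr 1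
        rw [hR, hQ]
        apply Finset.prod_congr _ (fun _ _ => rfl)
        ext i
        simp only [Finset.mem_filter, Finset.mem_erase, hxj, Nat.cast_inj]
        tauto
      have hfx0 : f x = 0 := by rw [hxj]; exact hfj0 j hjS
      have hslope : Tendsto (slope f x) (𝓝[≠] x) (𝓝 (deriv f x)) :=
        hasDerivAt_iff_tendsto_slope.mp ((hf x hx).differentiableAt.hasDerivAt)
      have hQt : Tendsto Q (𝓝[≠] x) (𝓝 (Q x)) :=
        hQc.continuousAt.tendsto.mono_left nhdsWithin_le_nhds
      have htend : Tendsto (fun y => slope f x y / Q y) (𝓝[≠] x)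
          (𝓝 (deriv f x / Q x)) := hslope.div hQt hQx
      have hev : ∀ᶠ y in 𝓝[≠] x, slope f x y / Q y = g y := by
        have h1 : ∀ᶠ y in 𝓝[≠] x, Q y ≠ 0 :=
          (hQc.continuousAt.eventually_ne hQx).filter_mono nhdsWithin_le_nhds
        filter_upwards [h1, self_mem_nhdsWithin] with y hQy hyx
        have hyx' : y ≠ x := hyx
        have hPy : P y = (y - x) * Q y := by
          rw [hP, hQ, hxj]
          exact (Finset.mul_prod_erase S _ hjS).symm
        have hPy0 : P y ≠ 0 := by
          rw [hPy]
          exact mul_ne_zero (sub_ne_zero.mpr hyx') hQy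
        simp only [hg, if_neg hPy0]
        rw [hPy, slope_def_field, hfx0, sub_zero, div_div]
      have htg : Tendsto g (𝓝[≠] x) (𝓝 (g x)) := by
        rw [hgxval]
        exact Filter.Tendsto.congr' hev htend
      exact continuousWithinAt_compl_self.mp htg
    · have hev : ∀ᶠ y in nhds x, f y / P y = g y := by
        filter_upwards [hPcont.continuousAt.eventually_ne hPx] with y hy
        simp only [hg, if_neg hy]
      exact ContinuousAt.congr
        (((hf x hx).continuousAt).div hPcont.continuousAt hPx) hev
  -- IVT
  have hIVT : ∃ c ∈ Set.Ioo (k:ℝ) n, g c = 0 := by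
    rcases mul_neg_iff.mp hsign with ⟨h1, h2⟩ | ⟨h1, h2⟩
    · obtain ⟨c, hc, hgc⟩ := intermediate_value_Ioo' hkn'.le hgcont
        (Set.mem_Ioo.mpr ⟨h2, h1⟩)
      exact ⟨c, hc, hgc⟩
    · obtain ⟨c, hc, hgc⟩ := intermediate_value_Ioo hkn'.le hgcont
        (Set.mem_Ioo.mpr ⟨h1, h2⟩)
      exact ⟨c, hc, hgc⟩
  obtain ⟨c, hc, hgc⟩ := hIVT
  -- multiplicity function
  have key : ∀ x ∈ Set.Icc (k:ℝ) n, ∃ m : ℕ, ZeroMult f x m ∧ (f x = 0 → 1 ≤ m) ∧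
      (f x = 0 → deriv f x = 0 → 2 ≤ m) := fun x hx => key_mult hf hne hx
  set mult : ℝ → ℕ := fun x =>
    if hx : x ∈ Set.Icc (k:ℝ) n then (key x hx).choose else 0 with hmult
  have multspec : ∀ x (hx : x ∈ Set.Icc (k:ℝ) n), ZeroMult f x (mult x) ∧
      (f x = 0 → 1 ≤ mult x) ∧ (f x = 0 → deriv f x = 0 → 2 ≤ mult x) := by
    intro x hx
    rw [hmult]
    simp only [dif_pos hx]
    exact (key x hx).choose_spec
  -- the integer zeros
  set Z0 : Finset ℝ := S.image (Nat.cast : ℕ → ℝ) with hZ0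
  have hZ0card : Z0.card = n - k - 1 := by
    rw [hZ0, Finset.card_image_of_injective _ Nat.cast_injective, hScard]
  have hZ0mem : ∀ x ∈ Z0, x ∈ Set.Ioo (k:ℝ) n ∧ f x = 0 := by
    intro x hx
    rw [hZ0, Finset.mem_image] at hx
    obtain ⟨j, hj, rfl⟩ := hx
    obtain ⟨h1, h2⟩ := hmemS j hj
    exact ⟨⟨by exact_mod_cast h1, by exact_mod_cast h2⟩, hfj0 j hj⟩
  by_cases hPc : P c = 0
  · -- c is an integer j0 : double zero there
    obtain ⟨j0, hj0S, hcj0⟩ := (hPzero c).mp hPc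
    have hRc : R c ≠ 0 := hRne c
    have hdf : deriv f c = 0 := by
      rw [hg] at hgc
      simp only [if_pos hPc] at hgc
      exact (div_eq_zero_iff.mp hgc).resolve_right hRc
    have hcZ0 : c ∈ Z0 := by
      rw [hZ0, Finset.mem_image]; exact ⟨j0, hj0S, hcj0.symm⟩
    refine ⟨Z0, mult, ?_, ?_⟩
    · intro x hx
      obtain ⟨hx1, hx2⟩ := hZ0mem x hx
      exact ⟨hx1, hx2, (multspec x (Set.Ioo_subset_Icc_self hx1)).1⟩
    · have hb : ∀ x ∈ Z0, (if x = c then 2 else 1) ≤ mult x := by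
        intro x hx
        obtain ⟨hx1, hx2⟩ := hZ0mem x hx
        obtain ⟨_, hm1, hm2⟩ := multspec x (Set.Ioo_subset_Icc_self hx1)
        split_ifs with h
        · exact hm2 hx2 (h ▸ hdf)
        · exact hm1 hx2
      calc n - k = Z0.card + 1 := by omega
        _ = ∑ x ∈ Z0, (if x = c then 2 else 1) := by
            have hsplit : ∑ x ∈ Z0, (if x = c then 2 else 1)
                = (∑ x ∈ Z0, 1) + ∑ x ∈ Z0, (if x = c then 1 else 0) := by
              rw [← Finset.sum_add_distrib]
              apply Finset.sum_congr rfl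
              intros x _
              split_ifs <;> norm_num
            rw [hsplit, Finset.sum_ite_eq' Z0 c (fun _ => 1), if_pos hcZ0,
              ← Finset.card_eq_sum_ones]
        _ ≤ ∑ x ∈ Z0, mult x := Finset.sum_le_sum hb
  · -- c is an extra non-integer zero
    have hfc : f c = 0 := by
      rw [hg] at hgc
      simp only [if_neg hPc] at hgc
      exact (div_eq_zero_iff.mp hgc).resolve_right hPc
    have hcZ0 : c ∉ Z0 := by
      intro hcZ
      rw [hZ0, Finset.mem_image] at hcZ
      obtain ⟨j, hj, rfl⟩ := hcZ
      exact hPc ((hPzero _).mpr ⟨j, hj, rfl⟩)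
    refine ⟨insert c Z0, mult, ?_, ?_⟩
    · intro x hx
      rcases Finset.mem_insert.mp hx with rfl | hx
      · exact ⟨hc, hfc, (multspec x (Set.Ioo_subset_Icc_self hc)).1⟩
      · obtain ⟨hx1, hx2⟩ := hZ0mem x hx
        exact ⟨hx1, hx2, (multspec x (Set.Ioo_subset_Icc_self hx1)).1⟩
    · have hb : ∀ x ∈ insert c Z0, 1 ≤ mult x := by
        intro x hx
        rcases Finset.mem_insert.mp hx with rfl | hx
        · exact (multspec x (Set.Ioo_subset_Icc_self hc)).2.1 hfc
        · obtain ⟨hx1, hx2⟩ := hZ0mem x hx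
          exact (multspec x (Set.Ioo_subset_Icc_self hx1)).2.1 hx2
      calc n - k = (insert c Z0).card := by
            rw [Finset.card_insert_of_notMem hcZ0, hZ0card]; omega
        _ = ∑ x ∈ insert c Z0, 1 := (Finset.card_eq_sum_ones _)
        _ ≤ ∑ x ∈ insert c Z0, mult x := Finset.sum_le_sum hb
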